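/- Under the setting and positivity assumptions of the robust multiview covariate shift classifier (views V_g, V_o, projections π_v, features φ_v, ratios ρ_v(x) = p_train(π_v x)/p_test(π_v x), ρ(x) = p_train(x)/p_test(x), r_v(x) = ρ_v(x)/ρ(x)), define Z_θ(x) = ∑_{y'∈𝒴} exp(∑_{v∈V_g} ρ_v(x) θ_v·φ_v(π_v x, y') + ρ(x) ∑_{v'∈V_o} θ_{v'}·φ_{v'}(π_{v'} x, y')) and P̂_θ(y|x) = exp(∑_{v∈V_g} ρ_v(x) θ_v·φ_v(π_v x, y) + ρ(x) ∑_{v'∈V_o} θ_{v'}·φ_{v'}(π_{v'} x, y)) / Z_θ(x). Then for every parameter vector θ = (θ_v)_{v∈V_g∪V_o}: ∑_{x,y} p_train(x) p(y|x) [∑_{v∈V_g} r_v(x) θ_v·φ_v(π_v x, y) + ∑_{v'∈V_o} θ_{v'}·φ_{v'}(π_{v'} x, y)] − ∑_x p_test(x) log Z_θ(x) = ∑_{x,y} p_test(x) p(y|x) log P̂_θ(y|x). Consequently, the set of parameters maximizing the left-hand (Lagrangian dual) objective equals the set of parameters maximizing the conditional log-likelihood of the testing distribution under P̂_θ; i.e.,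 the parameters of the robust multiview covariate shift classifier are obtained through implicitly maximizing the conditional likelihood of testing data. -/

import Mathlib

open Finset

/-- Theorem 3 of the paper: the Lagrangian dual objective of the
robust multiview covariate shift classifier equals, for every parameter
`θ = (θg, θo)`, the conditional log-likelihood of the testing distribution
under the softmax model `P̂_θ`; consequently the two objectives have the same
set of maximizers, i.e. the parameters of the robust multiview covariate shift
classifier are obtained by implicitly maximizing the testing conditional
likelihood. -/
theorem robust_multiview_dual_equals_test_loglik
    {X Y Vg Vo : Type*} [Fintype X] [Fintype Y] [Fintype Vg] [Fintype Vo]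
    [Nonempty X] [Nonempty Y]
    (ptrain ptest : X → ℝ)
    (htrain_pos : ∀ x, 0 < ptrain x) (htrain_sum : ∑ x, ptrain x = 1)
    (htest_pos : ∀ x, 0 < ptest x) (htest_sum : ∑ x, ptest x = 1)
    (pcond : X → Y → ℝ)
    (hcond_nonneg : ∀ x y, 0 ≤ pcond x y) (hcond_sum : ∀ x, ∑ y, pcond x y = 1)
    -- generalized views
    (Xg : Vg → Type*) [∀ v, Fintype (Xg v)] [∀ v, DecidableEq (Xg v)]
    (πg : (v : Vg) → X → Xg v)
    (dg : Vg → ℕ)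
    (φg : (v : Vg) → Xg v → Y → Fin (dg v) → ℝ)
    -- non-generalized views
    (Xo : Vo → Type*) [∀ v, Fintype (Xo v)] [∀ v, DecidableEq (Xo v)]
    (πo : (v : Vo) → X → Xo v)
    (do_ : Vo → ℕ)
    (φo : (v : Vo) → Xo v → Y → Fin (do_ v) → ℝ)
    -- view marginals and density ratios ρ_v, ρ, r_v
    (mtrain mtest : (v : Vg) → X → ℝ)
    (hmtrain : ∀ v x, mtrain v x =
      ∑ x' ∈ Finset.univ.filter (fun x' => πg v x' = πg v x), ptrain x')
    (hmtest : ∀ v x, mtest v x =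
      ∑ x' ∈ Finset.univ.filter (fun x' => πg v x' = πg v x), ptest x')
    (hmtrain_pos : ∀ v x, 0 < mtrain v x) (hmtest_pos : ∀ v x, 0 < mtest v x)
    (ρv : Vg → X → ℝ) (hρv : ∀ v x, ρv v x = mtrain v x / mtest v x)
    (ρ : X → ℝ) (hρ : ∀ x, ρ x = ptrain x / ptest x)
    (r : Vg → X → ℝ) (hr : ∀ v x, r v x = ρv v x / ρ x)
    -- partition function and softmax model, as functions of θ = (θg, θo)
    (Z : (((v : Vg) → Fin (dg v) → ℝ) × ((v : Vo) → Fin (do_ v) → ℝ)) → X → ℝ)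
    (hZ : ∀ θ x, Z θ x = ∑ y', Real.exp
      ((∑ v, ρv v x * ∑ i, θ.1 v i * φg v (πg v x) y' i) +
        ρ x * ∑ v', ∑ i, θ.2 v' i * φo v' (πo v' x) y' i))
    (Phat : (((v : Vg) → Fin (dg v) → ℝ) × ((v : Vo) → Fin (do_ v) → ℝ)) →
      X → Y → ℝ)
    (hPhat : ∀ θ x y, Phat θ x y =
      Real.exp ((∑ v, ρv v x * ∑ i, θ.1 v i * φg v (πg v x) y i) +
        ρ x * ∑ v', ∑ i, θ.2 v' i * φo v' (πo v' x) y i) / Z θ x)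
    -- the Lagrangian dual objective
    (D : (((v : Vg) → Fin (dg v) → ℝ) × ((v : Vo) → Fin (do_ v) → ℝ)) → ℝ)
    (hD : ∀ θ, D θ =
      (∑ x, ∑ y, ptrain x * pcond x y *
        ((∑ v, r v x * ∑ i, θ.1 v i * φg v (πg v x) y i) +
          ∑ v', ∑ i, θ.2 v' i * φo v' (πo v' x) y i)) -
        ∑ x, ptest x * Real.log (Z θ x))
    -- the testing conditional log-likelihood
    (Ltest : (((v : Vg) → Fin (dg v) → ℝ) × ((v : Vo) → Fin (do_ v) → ℝ)) → ℝ)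
    (hLtest : ∀ θ, Ltest θ =
      ∑ x, ∑ y, ptest x * pcond x y * Real.log (Phat θ x y)) :
    (∀ θ, D θ = Ltest θ) ∧
      {θ | ∀ θ', D θ' ≤ D θ} = {θ | ∀ θ', Ltest θ' ≤ Ltest θ} := by
  have hEq : ∀ θ, D θ = Ltest θ := by
    intro θ
    have hZpos : ∀ x, 0 < Z θ x := by
      intro x
      rw [hZ]
      exact Finset.sum_pos (fun y _ => Real.exp_pos _) Finset.univ_nonempty
    have key : ∀ x y, ptest x * pcond x y * Real.log (Phat θ x y)
        = ptrain x * pcond x y *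
          ((∑ v, r v x * ∑ i, θ.1 v i * φg v (πg v x) y i) +
            ∑ v', ∑ i, θ.2 v' i * φo v' (πo v' x) y i)
          - ptest x * pcond x y * Real.log (Z θ x) := by
      intro x y
      have htr := (htrain_pos x).ne'
      have hte := (htest_pos x).ne'
      have h2 : ptest x * ρ x = ptrain x := by
        rw [hρ]; field_simp
      have h1 : ∀ v, ptrain x * r v x = ptest x * ρv v x := by
        intro v
        rw [hr v x, hρ]
        field_simp
      rw [hPhat, Real.log_div (Real.exp_ne_zero _) (hZpos x).ne', Real.log_exp]
      have hA : ptest x *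
          ((∑ v, ρv v x * ∑ i, θ.1 v i * φg v (πg v x) y i) +
            ρ x * ∑ v', ∑ i, θ.2 v' i * φo v' (πo v' x) y i)
          = ptrain x *
          ((∑ v, r v x * ∑ i, θ.1 v i * φg v (πg v x) y i) +
            ∑ v', ∑ i, θ.2 v' i * φo v' (πo v' x) y i) := by
        rw [mul_add, mul_add]
        congr 1
        · rw [Finset.mul_sum, Finset.mul_sum]
          refine Finset.sum_congr rfl fun v _ => ?_
          rw [← mul_assoc, ← mul_assoc, h1 v]
        · rw [← mul_assoc, h2]
      calc ptest x * pcond x y *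
            (((∑ v, ρv v x * ∑ i, θ.1 v i * φg v (πg v x) y i) +
              ρ x * ∑ v', ∑ i, θ.2 v' i * φo v' (πo v' x) y i)
              - Real.log (Z θ x))
          = pcond x y * (ptest x *
              ((∑ v, ρv v x * ∑ i, θ.1 v i * φg v (πg v x) y i) +
                ρ x * ∑ v', ∑ i, θ.2 v' i * φo v' (πo v' x) y i))
            - ptest x * pcond x y * Real.log (Z θ x) := by ring
        _ = _ := by rw [hA]; ring
    rw [hD, hLtest]
    have : ∀ x, ∑ y, ptest x * pcond x y * Real.log (Phat θ x y)
        = (∑ y, ptrain x * pcond x y *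
            ((∑ v, r v x * ∑ i, θ.1 v i * φg v (πg v x) y i) +
              ∑ v', ∑ i, θ.2 v' i * φo v' (πo v' x) y i))
          - ptest x * Real.log (Z θ x) := by
      intro x
      rw [Finset.sum_congr rfl fun y _ => key x y, Finset.sum_sub_distrib]
      congr 1
      have : ∑ y, ptest x * pcond x y * Real.log (Z θ x)
          = (∑ y, pcond x y) * (ptest x * Real.log (Z θ x)) := by
        rw [Finset.sum_mul]
        exact Finset.sum_congr rfl fun y _ => by ring
      rw [this, hcond_sum, one_mul]
    rw [Finset.sum_congr rfl fun x _ => this x, Finset.sum_sub_distrib]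
  refine ⟨hEq, ?_⟩
  ext θ
  simp only [Set.mem_setOf_eq, hEq]
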